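/- The neighbors (adjacent vertices) of the vertex 0 in the grlex polytope P are exactly w = (b-1)e_d and the points b e_j for 1 ≤ j ≤ d-1; in particular 0 has exactly d neighbors and the tangent cone of P at 0 equals ℝ^d_{≥0}. -/

import Mathlib

open Set Finset

/-- A polytope: convex hull of finitely many points. -/
def IsPolytope {n : ℕ} (X : Set (Fin n → ℝ)) : Prop :=
  ∃ V : Finset (Fin n → ℝ), X = convexHull ℝ (V : Set (Fin n → ℝ))

/-- Affine dimension of a set. -/
noncomputable def adim {n : ℕ} (S : Set (Fin n → ℝ)) : ℕ :=
  Module.finrank ℝ (vectorSpan ℝ S)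

/-- `F` is a facet of `X`: an exposed face of affine dimension one less than `X`. -/
def IsFacet {n : ℕ} (X F : Set (Fin n → ℝ)) : Prop :=
  IsExposed ℝ X F ∧ adim F + 1 = adim X

/-- Two vertices of `X` are adjacent if the segment joining them is an exposed face. -/
def AdjVert {n : ℕ} (X : Set (Fin n → ℝ)) (u v : Fin n → ℝ) : Prop :=
  u ≠ v ∧ u ∈ X.extremePoints ℝ ∧ v ∈ X.extremePoints ℝ ∧
    IsExposed ℝ X (segment ℝ u v)

/-- The convex cone generated by a set: all nonnegative multiples of convex combinations. -/
def coneHull {n : ℕ} (S : Set (Fin n → ℝ)) : Set (Fin n → ℝ) :=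
  {0} ∪ {p | ∃ c : ℝ, 0 ≤ c ∧ ∃ z ∈ convexHull ℝ S, p = c • z}

/-- The tangent cone of `X` at a vertex `v`:
`v + cone{x - v : x an adjacent vertex of v}`. -/
def tangentCone {n : ℕ} (X : Set (Fin n → ℝ)) (v : Fin n → ℝ) : Set (Fin n → ℝ) :=
  {p | ∃ y ∈ coneHull {z | ∃ x, AdjVert X v x ∧ z = x - v}, p = v + y}

/-- The graph (1-skeleton) of a polytope `X`, with the vertices of `X` as nodes. -/
def polyGraph {n : ℕ} (X : Set (Fin n → ℝ)) : SimpleGraph (Fin n → ℝ) where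
  Adj := AdjVert X
  symm := by
    constructor
    intro u v h
    refine ⟨h.1.symm, h.2.2.1, h.2.1, ?_⟩
    rw [segment_symm]; exact h.2.2.2
  loopless := by constructor; intro u h; exact h.1 rfl

/-- Real point corresponding to an integer point. -/
def toR {d : ℕ} (x : Fin d → ℤ) : Fin d → ℝ := fun i => (x i : ℝ)

/-- Lexicographic order comparing from the last coordinate. -/
def lexLe {d : ℕ} (x y : Fin d → ℤ) : Prop :=
  x = y ∨ ∃ i : Fin d, x i < y i ∧ ∀ k : Fin d, i < k → x k = y k

/-- Graded lexicographic order. -/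
def grlexLe {d : ℕ} (x y : Fin d → ℤ) : Prop :=
  (∑ i, x i) < (∑ i, y i) ∨ ((∑ i, x i) = (∑ i, y i) ∧ lexLe x y)

/-- Graded reverse lexicographic order. -/
def grevlexLe {d : ℕ} (x y : Fin d → ℤ) : Prop :=
  (∑ i, x i) < (∑ i, y i) ∨ ((∑ i, x i) = (∑ i, y i) ∧ lexLe y x)

/-- The grlex polytope `P = conv{x ∈ ℤᵈ : 0 ≤ x ≼_grlex θ}`. -/
def grlexP (d : ℕ) (θ : Fin d → ℤ) : Set (Fin d → ℝ) :=
  convexHull ℝ {p | ∃ x : Fin d → ℤ, (∀ i, 0 ≤ x i) ∧ grlexLe x θ ∧ p = toR x}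

/-- The grevlex polytope `Q = conv{x ∈ ℤᵈ : 0 ≤ x ≼_grevlex θ}`. -/
def grevlexQ (d : ℕ) (θ : Fin d → ℤ) : Set (Fin d → ℝ) :=
  convexHull ℝ {p | ∃ x : Fin d → ℤ, (∀ i, 0 ≤ x i) ∧ grevlexLe x θ ∧ p = toR x}

/-- `b`, the total sum of `θ`. -/
def bsum {d : ℕ} (θ : Fin d → ℤ) : ℤ := ∑ i, θ i

/-- `b̃ₖ`, the sum of the first `k` coordinates of `θ` (`k` is 1-indexed). -/
def btil {d : ℕ} (θ : Fin d → ℤ) (k : ℕ) : ℤ :=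
  ∑ i ∈ Finset.univ.filter (fun i : Fin d => (i : ℕ) < k), θ i

/-- The vertex `w = (b-1)e_d` of `P`. -/
def wP (d : ℕ) (θ : Fin d → ℤ) : Fin d → ℤ :=
  fun i => if (i : ℕ) = d - 1 then bsum θ - 1 else 0

/-- The vertex `u^k = ((b̃_{k-1}+1)e_{k-1}, θ_k - 1, θ_{k+1}, …, θ_d)` of `P` (paper's
1-indexing: coordinate `j` of the paper is index `j-1` here). -/
def uP (d : ℕ) (θ : Fin d → ℤ) (k : ℕ) : Fin d → ℤ :=
  fun i => if (i : ℕ) = k - 2 then btil θ (k - 1) + 1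
    else if (i : ℕ) = k - 1 then θ i - 1
    else if k ≤ (i : ℕ) then θ i else 0

/-- The vertex `v^{j,k} = (b̃_k e_j, 0, …, 0, θ_{k+1}, …, θ_d)` of `P` (1-indexed). -/
def vP (d : ℕ) (θ : Fin d → ℤ) (j k : ℕ) : Fin d → ℤ :=
  fun i => if (i : ℕ) = j - 1 then btil θ k
    else if k ≤ (i : ℕ) then θ i else 0

/-- The point `b·e_j` (1-indexed `j`). -/
def beP (d : ℕ) (θ : Fin d → ℤ) (j : ℕ) : Fin d → ℤ :=
  fun i => if (i : ℕ) = j - 1 then bsum θ else 0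

/-- The vertex `u^k = (b̃_{k-1}e_{k-1}, θ_k, …, θ_d)` of `Q` (1-indexed, `2 ≤ k ≤ d+1`). -/
def uQ (d : ℕ) (θ : Fin d → ℤ) (k : ℕ) : Fin d → ℤ :=
  fun i => if (i : ℕ) = k - 2 then btil θ (k - 1)
    else if k - 1 ≤ (i : ℕ) then θ i else 0

/-- The vertex `v^{j,k} = ((b̃_{k-1}-1)e_j, 0, …, 0, θ_k + 1, θ_{k+1}, …, θ_d)` of `Q`. -/
def vQ (d : ℕ) (θ : Fin d → ℤ) (j k : ℕ) : Fin d → ℤ :=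
  fun i => if (i : ℕ) = j - 1 then btil θ (k - 1) - 1
    else if (i : ℕ) = k - 1 then θ i + 1
    else if k ≤ (i : ℕ) then θ i else 0

/-- Edge boundary of a vertex set in a graph. -/
def eboundary {V : Type*} (G : SimpleGraph V) (S : Set V) : Set (V × V) :=
  {p | G.Adj p.1 p.2 ∧ p.1 ∈ S ∧ p.2 ∉ S}

section General
variable {n : ℕ}

noncomputable def clm (c : Fin n → ℝ) : (Fin n → ℝ) →L[ℝ] ℝ :=
  ∑ i, c i • (ContinuousLinearMap.proj i : (Fin n → ℝ) →L[ℝ] ℝ)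

lemma clm_apply (c x : Fin n → ℝ) : clm c x = ∑ i, c i * x i := by
  simp [clm, ContinuousLinearMap.sum_apply]

lemma clm_repr (l : (Fin n → ℝ) →L[ℝ] ℝ) (x : Fin n → ℝ) :
    l x = ∑ i, x i * l (Pi.single i (1:ℝ)) := by
  have hx : x = ∑ i, x i • (Pi.single i 1 : Fin n → ℝ) := by
    funext k
    simp [Finset.sum_apply, Pi.single_apply]
  calc l x = l (∑ i, x i • (Pi.single i 1 : Fin n → ℝ)) := by rw [← hx]
    _ = ∑ i, x i * l (Pi.single i (1:ℝ)) := by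
        rw [map_sum]; simp

lemma face_convexHull (S : Set (Fin n → ℝ)) (l : (Fin n → ℝ) →L[ℝ] ℝ) (c : ℝ)
    (hle : ∀ x ∈ S, l x ≤ c) (x₀ : Fin n → ℝ) (hx₀ : x₀ ∈ S) (hx₀c : l x₀ = c) :
    {x ∈ convexHull ℝ S | ∀ y ∈ convexHull ℝ S, l y ≤ l x}
      = convexHull ℝ {x ∈ S | l x = c} := by
  have hlin : IsLinearMap ℝ (fun z : Fin n → ℝ => l z) := ⟨map_add l, map_smul l⟩
  have hconv : ∀ y ∈ convexHull ℝ S, l y ≤ c := fun y hy =>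
    convexHull_min hle (convex_halfSpace_le hlin c) hy
  have hmax : {x ∈ convexHull ℝ S | ∀ y ∈ convexHull ℝ S, l y ≤ l x}
      = {x ∈ convexHull ℝ S | l x = c} := by
    ext x
    constructor
    · rintro ⟨hx, hm⟩
      exact ⟨hx, le_antisymm (hconv x hx)
        (hx₀c ▸ hm x₀ (subset_convexHull ℝ S hx₀))⟩
    · rintro ⟨hx, hc⟩
      exact ⟨hx, fun y hy => hc ▸ hconv y hy⟩
  rw [hmax]
  apply Set.Subset.antisymm
  · rintro x ⟨hx, hlx⟩
    rw [_root_.convexHull_eq] at hx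
    obtain ⟨ι, t, w, z, hw0, hw1, hzS, hcm⟩ := hx
    have hxsum : x = ∑ i ∈ t, w i • z i := by
      rw [← hcm, Finset.centerMass_eq_of_sum_1 _ _ hw1]
    have hlsum : ∑ i ∈ t, w i * (c - l (z i)) = 0 := by
      have h1 : l x = ∑ i ∈ t, w i * l (z i) := by
        rw [hxsum, map_sum]; simp
      have h2 : ∑ i ∈ t, w i * c = c := by rw [← Finset.sum_mul, hw1, one_mul]
      have := h1 ▸ hlx
      simp only [mul_sub]
      rw [Finset.sum_sub_distrib, h2, ← h1, hlx, sub_self]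
    have key : ∀ i ∈ t, w i * (c - l (z i)) = 0 :=
      (Finset.sum_eq_zero_iff_of_nonneg (fun i hi =>
        mul_nonneg (hw0 i hi) (sub_nonneg.2 (hle _ (hzS i hi))))).1 hlsum
    have hfil := Finset.centerMass_filter_ne_zero (t := t) (w := w) z
    rw [← hcm, ← hfil]
    apply Finset.centerMass_mem_convexHull
    · intro i hi; exact hw0 i (Finset.mem_filter.1 hi).1
    · have : ∑ i ∈ {i ∈ t | w i ≠ 0}, w i = 1 := by
        rw [Finset.sum_filter_ne_zero, hw1]
      rw [this]; norm_num
    · intro i hi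
      obtain ⟨hit, hwne⟩ := Finset.mem_filter.1 hi
      refine ⟨hzS i hit, ?_⟩
      have := key i hit
      rcases mul_eq_zero.1 this with h | h
      · exact absurd h hwne
      · linarith [sub_eq_zero.1 h]
  · intro x hx
    have h1 : x ∈ convexHull ℝ S :=
      convexHull_mono (fun y hy => hy.1) hx
    have h2 : l x = c := by
      have : convexHull ℝ {x ∈ S | l x = c} ⊆ {z | l z = c} :=
        convexHull_min (fun y hy => hy.2) (convex_hyperplane hlin c)
      exact this hx
    exact ⟨h1, h2⟩

lemma isExposed_face (S : Set (Fin n → ℝ)) (l : (Fin n → ℝ) →L[ℝ] ℝ) (c : ℝ)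
    (hle : ∀ x ∈ S, l x ≤ c) (x₀ : Fin n → ℝ) (hx₀ : x₀ ∈ S) (hx₀c : l x₀ = c) :
    IsExposed ℝ (convexHull ℝ S) (convexHull ℝ {x ∈ S | l x = c}) :=
  fun _ => ⟨l, (face_convexHull S l c hle x₀ hx₀ hx₀c).symm⟩

lemma mem_segment_zero {v p : Fin n → ℝ} :
    p ∈ segment ℝ (0 : Fin n → ℝ) v ↔ ∃ a : ℝ, 0 ≤ a ∧ a ≤ 1 ∧ p = a • v := by
  rw [segment_eq_image]
  constructor
  · rintro ⟨a, ha, rfl⟩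
    exact ⟨a, ha.1, ha.2, by simp⟩
  · rintro ⟨a, h0, h1, rfl⟩
    exact ⟨a, ⟨h0, h1⟩, by simp⟩

lemma segment_zero_endpoint {u v : Fin n → ℝ}
    (h : segment ℝ (0 : Fin n → ℝ) u = segment ℝ 0 v) (hu : u ≠ 0) : u = v := by
  obtain ⟨a, ha0, ha1, hau⟩ := mem_segment_zero.1 (h ▸ right_mem_segment ℝ (0:Fin n → ℝ) u)
  obtain ⟨b, hb0, hb1, hbv⟩ := mem_segment_zero.1 (h ▸ right_mem_segment ℝ (0:Fin n → ℝ) v)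
  -- u = a • v, v = b • u
  have : u = (a*b) • u := by rw [mul_smul, ← hbv, ← hau]
  have hab : 1 - a*b = 0 := by
    rcases smul_eq_zero.1 (show (1 - a*b) • u = 0 by rw [sub_smul, one_smul, ← this, sub_self]) with h' | h'
    · exact h'
    · exact absurd h' hu
  have ha : a = 1 := by nlinarith
  rw [hau, ha, one_smul]

end General

section GrlexAux

def gS (d : ℕ) (θ : Fin d → ℤ) : Set (Fin d → ℝ) :=
  {p | ∃ x : Fin d → ℤ, (∀ i, 0 ≤ x i) ∧ grlexLe x θ ∧ p = toR x}

def eI {n : ℕ} (j : Fin n) (t : ℤ) : Fin n → ℤ := fun i => if i = j then t else 0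

def mJ {d : ℕ} (θ : Fin d → ℤ) (j : Fin d) : ℤ :=
  if (j : ℕ) = d - 1 then bsum θ - 1 else bsum θ

variable {d : ℕ} {θ : Fin d → ℤ}

lemma sum_eI (j : Fin d) (t : ℤ) : ∑ i, eI j t i = t := by simp [eI]

lemma bsum_ge (hd : 3 ≤ d) (hθ : ∀ i, 1 ≤ θ i) : 3 ≤ bsum θ := by
  have h1 : (d : ℤ) • (1:ℤ) ≤ ∑ i, θ i := by
    simpa using Finset.card_nsmul_le_sum Finset.univ θ 1 (fun i _ => hθ i)
  have : (d : ℤ) ≤ bsum θ := by simpa [bsum] using h1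
  omega

lemma theta_add_two_le (hd : 3 ≤ d) (hθ : ∀ i, 1 ≤ θ i) (j : Fin d) :
    θ j + 2 ≤ bsum θ := by
  have hsplit : θ j + ∑ i ∈ Finset.univ.erase j, θ i = bsum θ :=
    Finset.add_sum_erase Finset.univ θ (Finset.mem_univ j)
  have hcard : (Finset.univ.erase j).card = d - 1 := by
    rw [Finset.card_erase_of_mem (Finset.mem_univ j), Finset.card_univ, Fintype.card_fin]
  have h1 : ((d - 1 : ℕ) : ℤ) • (1:ℤ) ≤ ∑ i ∈ Finset.univ.erase j, θ i := by
    simpa [hcard] using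
      Finset.card_nsmul_le_sum (Finset.univ.erase j) θ 1 (fun i _ => hθ i)
  have h2 : ((d - 1 : ℕ) : ℤ) ≤ ∑ i ∈ Finset.univ.erase j, θ i := by simpa using h1
  have h3 : (2 : ℤ) ≤ ((d - 1 : ℕ) : ℤ) := by omega
  omega

lemma sum_le_bsum {x : Fin d → ℤ} (hg : grlexLe x θ) : ∑ i, x i ≤ bsum θ := by
  rcases hg with h | ⟨h, _⟩
  · exact h.le
  · exact h.le

lemma grlex_eI (hd : 3 ≤ d) (hθ : ∀ i, 1 ≤ θ i) (j : Fin d) (t : ℤ)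
    (ht : t ≤ mJ θ j) : grlexLe (eI j t) θ := by
  unfold mJ at ht
  by_cases hj : (j : ℕ) = d - 1
  · rw [if_pos hj] at ht
    unfold bsum at ht
    exact Or.inl (by rw [sum_eI]; omega)
  · rw [if_neg hj] at ht
    rcases lt_or_eq_of_le ht with h | h
    · exact Or.inl (by rw [sum_eI]; exact h)
    · refine Or.inr ⟨by rw [sum_eI, h]; rfl, Or.inr ⟨⟨d - 1, by omega⟩, ?_, ?_⟩⟩
      · have hne : (⟨d - 1, by omega⟩ : Fin d) ≠ j := by
          intro heq
          exact hj (by rw [← heq])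
        have : eI j t ⟨d - 1, by omega⟩ = 0 := if_neg hne
        rw [this]
        linarith [hθ (⟨d - 1, by omega⟩ : Fin d)]
      · intro k hk
        have h1 : d - 1 < (k : ℕ) := Fin.lt_def.1 hk
        exact absurd k.isLt (by omega)

lemma not_grlex_eI_last (hd : 3 ≤ d) (hθ : ∀ i, 1 ≤ θ i) :
    ¬ grlexLe (eI (⟨d - 1, by omega⟩ : Fin d) (bsum θ)) θ := by
  set j : Fin d := ⟨d - 1, by omega⟩ with hjdef
  rintro (h | ⟨hs, hl⟩)
  · rw [sum_eI] at h; exact lt_irrefl _ h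
  · have hjb : θ j + 2 ≤ bsum θ := theta_add_two_le hd hθ j
    rcases hl with heq | ⟨i, hi, hk⟩
    · have : θ j = bsum θ := by
        rw [show θ j = eI j (bsum θ) j from by rw [heq]]
        simp [eI]
      omega
    · by_cases hij : i = j
      · subst hij
        have : eI j (bsum θ) j = bsum θ := by simp [eI]
        omega
      · have hlt : i < j := by
          rw [Fin.lt_def]
          show (i : ℕ) < d - 1
          have h1 : (i : ℕ) < d := i.isLt
          have h2 : (i : ℕ) ≠ d - 1 := fun h => hij (Fin.ext h)
          omega
        have := hk j hlt
        have h3 : eI j (bsum θ) j = bsum θ := by simp [eI]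
        omega

lemma eI_char (hd : 3 ≤ d) (hθ : ∀ i, 1 ≤ θ i) (i₀ : Fin d) (x : Fin d → ℤ)
    (hx0 : ∀ i, 0 ≤ x i) (hg : grlexLe x θ) (hz : ∀ i, i ≠ i₀ → x i = 0) :
    0 ≤ x i₀ ∧ x i₀ ≤ mJ θ i₀ ∧ x = eI i₀ (x i₀) := by
  have hxe : x = eI i₀ (x i₀) := by
    funext i
    by_cases h : i = i₀
    · subst h; simp [eI]
    · rw [hz i h]; simp [eI, h]
  have hsum : ∑ i, x i = x i₀ := by
    rw [← Finset.add_sum_erase Finset.univ x (Finset.mem_univ i₀)]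
    have : ∑ i ∈ Finset.univ.erase i₀, x i = 0 :=
      Finset.sum_eq_zero (fun i hi => hz i (Finset.mem_erase.1 hi).1)
    omega
  have hle : x i₀ ≤ bsum θ := hsum ▸ sum_le_bsum hg
  refine ⟨hx0 i₀, ?_, hxe⟩
  unfold mJ
  by_cases hj : (i₀ : ℕ) = d - 1
  · rw [if_pos hj]
    by_contra hgt
    have hxb : x i₀ = bsum θ := by omega
    have hi₀ : i₀ = (⟨d - 1, by omega⟩ : Fin d) := Fin.ext hj
    exact not_grlex_eI_last hd hθ (by rw [← hi₀, ← hxb, ← hxe]; exact hg)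
  · rw [if_neg hj]; exact hle

lemma mem_gS_eI (hd : 3 ≤ d) (hθ : ∀ i, 1 ≤ θ i) (j : Fin d) (t : ℤ)
    (h0 : 0 ≤ t) (ht : t ≤ mJ θ j) : toR (eI j t) ∈ gS d θ := by
  refine ⟨eI j t, fun i => ?_, grlex_eI hd hθ j t ht, rfl⟩
  unfold eI; split <;> omega

lemma sum_ite_coeff (j : Fin d) (A B : ℤ) (x : Fin d → ℤ) :
    ∑ i, (if i = j then A else B) * x i
      = A * x j + B * ∑ i ∈ Finset.univ.erase j, x i := by
  rw [← Finset.add_sum_erase Finset.univ (fun i => (if i = j then A else B) * x i)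
    (Finset.mem_univ j), if_pos rfl, Finset.mul_sum]
  congr 1
  exact Finset.sum_congr rfl (fun i hi => by rw [if_neg (Finset.mem_erase.1 hi).1])

lemma clm_int (a : Fin d → ℤ) (x : Fin d → ℤ) :
    clm (fun i => ((a i : ℤ) : ℝ)) (toR x) = ((∑ i, a i * x i : ℤ) : ℝ) := by
  rw [clm_apply]
  push_cast
  rfl

lemma toR_inj {x y : Fin d → ℤ} (h : toR x = toR y) : x = y := by
  funext i
  have h2 : ((x i : ℤ) : ℝ) = ((y i : ℤ) : ℝ) := congrFun h i
  exact_mod_cast h2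

lemma gS_zero (hd : 3 ≤ d) (hθ : ∀ i, 1 ≤ θ i) : (0 : Fin d → ℝ) ∈ gS d θ := by
  refine ⟨fun _ => 0, fun i => le_refl _, Or.inl ?_, by funext i; simp [toR]⟩
  have := bsum_ge hd hθ
  unfold bsum at this
  simp
  omega

lemma face0 (hd : 3 ≤ d) (hθ : ∀ i, 1 ≤ θ i) :
    {p ∈ gS d θ | clm (fun i => (((-1 : ℤ)) : ℝ)) p = 0} = {(0 : Fin d → ℝ)} := by
  apply Set.Subset.antisymm
  · rintro p ⟨⟨x, hx0, hg, rfl⟩, hv⟩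
    have hv' : clm (fun i => (((fun _ : Fin d => (-1:ℤ)) i : ℤ) : ℝ)) (toR x)
        = ((0 : ℤ) : ℝ) := by simpa using hv
    rw [clm_int] at hv'
    have hint : ∑ i, (-1) * x i = 0 := by exact_mod_cast hv'
    have hsum : ∑ i, x i = 0 := by
      have : ∑ i, (-1) * x i = -∑ i, x i := by
        rw [← Finset.sum_neg_distrib]
        exact Finset.sum_congr rfl (fun i _ => by ring)
      omega
    have hz : ∀ i ∈ Finset.univ, x i = 0 :=
      (Finset.sum_eq_zero_iff_of_nonneg (fun i _ => hx0 i)).1 hsum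
    have : toR x = 0 := by
      funext i
      simp [toR, hz i (Finset.mem_univ i)]
    simp [this]
  · rintro p rfl
    exact ⟨gS_zero hd hθ, by simp [clm_apply]⟩

lemma faceT (hd : 3 ≤ d) (hθ : ∀ i, 1 ≤ θ i) (j : Fin d) :
    {p ∈ gS d θ | clm (fun i => (((if i = j then 0 else -1 : ℤ)) : ℝ)) p = 0}
      = {p | ∃ t : ℤ, 0 ≤ t ∧ t ≤ mJ θ j ∧ p = toR (eI j t)} := by
  apply Set.Subset.antisymm
  · rintro p ⟨⟨x, hx0, hg, rfl⟩, hv⟩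
    have hv' : clm (fun i => (((fun i => if i = j then 0 else -1 : Fin d → ℤ) i : ℤ) : ℝ)) (toR x)
        = ((0 : ℤ) : ℝ) := by simpa using hv
    rw [clm_int] at hv'
    have hint : ∑ i, (if i = j then 0 else -1) * x i = 0 := by exact_mod_cast hv'
    rw [sum_ite_coeff] at hint
    have hsz : ∑ i ∈ Finset.univ.erase j, x i = 0 := by omega
    have hz : ∀ i, i ≠ j → x i = 0 := by
      intro i hi
      exact (Finset.sum_eq_zero_iff_of_nonneg (fun i _ => hx0 i)).1 hsz i
        (Finset.mem_erase.2 ⟨hi, Finset.mem_univ i⟩)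
    obtain ⟨h1, h2, h3⟩ := eI_char hd hθ j x hx0 hg hz
    exact ⟨x j, h1, h2, by rw [← h3]⟩
  · rintro p ⟨t, h0, ht, rfl⟩
    refine ⟨mem_gS_eI hd hθ j t h0 ht, ?_⟩
    have : clm (fun i => (((fun i => if i = j then 0 else -1 : Fin d → ℤ) i : ℤ) : ℝ)) (toR (eI j t))
        = ((∑ i, (if i = j then 0 else -1) * eI j t i : ℤ) : ℝ) := clm_int _ _
    have h2 : ∑ i, (if i = j then (0:ℤ) else -1) * eI j t i = 0 := by
      rw [sum_ite_coeff]
      have : ∑ i ∈ Finset.univ.erase j, eI j t i = 0 :=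
        Finset.sum_eq_zero (fun i hi => if_neg (Finset.mem_erase.1 hi).1)
      rw [this]
      ring
    rw [this, h2]
    norm_num

lemma faceV (hd : 3 ≤ d) (hθ : ∀ i, 1 ≤ θ i) (j : Fin d) :
    {p ∈ gS d θ | clm (fun i => (((if i = j then 1 else -(bsum θ) : ℤ)) : ℝ)) p
        = ((mJ θ j : ℤ) : ℝ)}
      = {toR (eI j (mJ θ j))} := by
  have hb := bsum_ge hd hθ
  have hmj : bsum θ - 1 ≤ mJ θ j ∧ mJ θ j ≤ bsum θ := by unfold mJ; split <;> omega
  apply Set.Subset.antisymm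
  · rintro p ⟨⟨x, hx0, hg, rfl⟩, hv⟩
    have hv' : clm (fun i => (((fun i => if i = j then 1 else -(bsum θ) : Fin d → ℤ) i : ℤ) : ℝ)) (toR x)
        = ((mJ θ j : ℤ) : ℝ) := by simpa using hv
    rw [clm_int] at hv'
    have hint : ∑ i, (if i = j then 1 else -(bsum θ)) * x i = mJ θ j := by exact_mod_cast hv'
    rw [sum_ite_coeff] at hint
    set s := ∑ i ∈ Finset.univ.erase j, x i with hsdef
    have hs0 : 0 ≤ s := Finset.sum_nonneg (fun i _ => hx0 i)
    have hxs : x j + s = ∑ i, x i :=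
      Finset.add_sum_erase Finset.univ x (Finset.mem_univ j)
    have hxsle : x j + s ≤ bsum θ := by rw [hxs]; exact sum_le_bsum hg
    have hs : s = 0 := by
      by_contra hne
      have h1 : 1 ≤ s := by omega
      have h2 : bsum θ ≤ bsum θ * s := le_mul_of_one_le_right (by omega) h1
      linarith [hmj.1]
    have hz : ∀ i, i ≠ j → x i = 0 := by
      intro i hi
      refine (Finset.sum_eq_zero_iff_of_nonneg (fun i _ => hx0 i)).1 hs i
        (Finset.mem_erase.2 ⟨hi, Finset.mem_univ i⟩)
    obtain ⟨h1, h2, h3⟩ := eI_char hd hθ j x hx0 hg hz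
    rw [hs, mul_zero, add_zero, one_mul] at hint
    rw [h3, hint]
    rfl
  · rintro p rfl
    refine ⟨mem_gS_eI hd hθ j (mJ θ j) (by omega) (le_refl _), ?_⟩
    have heq : clm (fun i => (((fun i => if i = j then 1 else -(bsum θ) : Fin d → ℤ) i : ℤ) : ℝ)) (toR (eI j (mJ θ j)))
        = ((∑ i, (if i = j then 1 else -(bsum θ)) * eI j (mJ θ j) i : ℤ) : ℝ) := clm_int _ _
    have h2 : ∑ i, (if i = j then (1:ℤ) else -(bsum θ)) * eI j (mJ θ j) i = mJ θ j := by
      rw [sum_ite_coeff]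
      have : ∑ i ∈ Finset.univ.erase j, eI j (mJ θ j) i = 0 :=
        Finset.sum_eq_zero (fun i hi => if_neg (Finset.mem_erase.1 hi).1)
      rw [this]
      simp [eI]
    rw [heq, h2]

lemma toR_eI_apply (j : Fin d) (t : ℤ) (i : Fin d) :
    toR (eI j t) i = if i = j then (t : ℝ) else 0 := by
  simp [toR, eI, apply_ite (fun z : ℤ => (z : ℝ))]

lemma toR_eI_zero (j : Fin d) : toR (eI j 0) = (0 : Fin d → ℝ) := by
  funext i; simp [toR_eI_apply]

lemma mem_segment_zero' {n : ℕ} {v p : Fin n → ℝ} :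
    p ∈ segment ℝ (0 : Fin n → ℝ) v ↔ ∃ a : ℝ, 0 ≤ a ∧ a ≤ 1 ∧ p = a • v := by
  rw [segment_eq_image]
  constructor
  · rintro ⟨a, ha, rfl⟩
    exact ⟨a, ha.1, ha.2, by simp⟩
  · rintro ⟨a, h0, h1, rfl⟩
    exact ⟨a, ⟨h0, h1⟩, by simp⟩

lemma convexHull_eI_range (j : Fin d) (m : ℤ) (hm : 0 ≤ m) :
    convexHull ℝ {p | ∃ t : ℤ, 0 ≤ t ∧ t ≤ m ∧ p = toR (eI j t)}
      = segment ℝ (0 : Fin d → ℝ) (toR (eI j m)) := by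
  apply Set.Subset.antisymm
  · apply convexHull_min
    · rintro p ⟨t, h0, htm, rfl⟩
      rcases eq_or_lt_of_le hm with h | h
      · have ht : t = 0 := by omega
        subst ht
        rw [toR_eI_zero]
        exact left_mem_segment ℝ _ _
      · refine mem_segment_zero'.2 ⟨(t : ℝ) / (m : ℝ), by positivity, ?_, ?_⟩
        · rw [div_le_one (by exact_mod_cast h)]
          exact_mod_cast htm
        · funext i
          rw [toR_eI_apply]
          have hm0 : (m : ℝ) ≠ 0 := by exact_mod_cast (by omega : m ≠ 0)
          by_cases hij : i = j
          · rw [if_pos hij, Pi.smul_apply, toR_eI_apply, if_pos hij, smul_eq_mul,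
              div_mul_cancel₀ _ hm0]
          · rw [if_neg hij, Pi.smul_apply, toR_eI_apply, if_neg hij, smul_eq_mul, mul_zero]
    · exact convex_segment _ _
  · rw [← convexHull_pair]
    apply convexHull_mono
    rintro p (rfl | rfl)
    · exact ⟨0, le_refl _, hm, (toR_eI_zero j).symm⟩
    · exact ⟨m, hm, le_refl _, rfl⟩

lemma wP_eq (hd : 3 ≤ d) : wP d θ = eI (⟨d - 1, by omega⟩ : Fin d) (bsum θ - 1) := by
  funext i
  simp only [wP, eI]
  by_cases h : (i : ℕ) = d - 1
  · rw [if_pos h, if_pos (Fin.ext h)]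
  · rw [if_neg h, if_neg (fun he => h (by rw [he]))]

lemma beP_eq (hd : 3 ≤ d) (j : ℕ) (h1 : 1 ≤ j) (h2 : j ≤ d - 1) :
    beP d θ j = eI (⟨j - 1, by omega⟩ : Fin d) (bsum θ) := by
  funext i
  simp only [beP, eI]
  by_cases h : (i : ℕ) = j - 1
  · rw [if_pos h, if_pos (Fin.ext h)]
  · rw [if_neg h, if_neg (fun he => h (by rw [he]))]

lemma single_eq_toR (i : Fin d) : (Pi.single i 1 : Fin d → ℝ) = toR (eI i 1) := by
  funext k
  rw [toR_eI_apply]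
  simp [Pi.single_apply]

lemma mJ_ge (hd : 3 ≤ d) (hθ : ∀ i, 1 ≤ θ i) (j : Fin d) : 2 ≤ mJ θ j := by
  have := bsum_ge hd hθ
  unfold mJ; split <;> omega

end GrlexAux

/-- The neighbors of the vertex `0` of the grlex polytope `P` are exactly
`w = (b-1)e_d` and the points `b·e_j` for `1 ≤ j ≤ d-1`; in particular `0` has exactly
`d` neighbors, and the tangent cone of `P` at `0` is the nonnegative orthant. -/
theorem grlexP_neighbors_of_zero (d : ℕ) (hd : 3 ≤ d) (θ : Fin d → ℤ)
    (hθ : ∀ i, 1 ≤ θ i) :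
    {u | AdjVert (grlexP d θ) 0 u} =
        {toR (wP d θ)} ∪ {p | ∃ j : ℕ, 1 ≤ j ∧ j ≤ d - 1 ∧ p = toR (beP d θ j)} ∧
      {u | AdjVert (grlexP d θ) 0 u}.ncard = d ∧
      tangentCone (grlexP d θ) 0 = {x | ∀ i, 0 ≤ x i} := by
  have hb := bsum_ge hd hθ
  have hPeq : grlexP d θ = convexHull ℝ (gS d θ) := rfl
  have h0S : (0 : Fin d → ℝ) ∈ gS d θ := gS_zero hd hθ
  -- bounds for the three families of linear functionals on gS
  have hle0 : ∀ p ∈ gS d θ, clm (fun _ : Fin d => (((-1 : ℤ)) : ℝ)) p ≤ 0 := by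
    rintro p ⟨x, hx0, hg, rfl⟩
    have h1 : clm (fun i : Fin d => (((fun _ : Fin d => (-1 : ℤ)) i : ℤ) : ℝ)) (toR x)
        = ((∑ i, (-1) * x i : ℤ) : ℝ) := clm_int _ _
    have h2 : ∑ i, (-1 : ℤ) * x i ≤ 0 := by
      apply Finset.sum_nonpos
      intro i _
      have := hx0 i
      omega
    calc clm (fun _ : Fin d => (((-1 : ℤ)) : ℝ)) (toR x)
        = ((∑ i, (-1) * x i : ℤ) : ℝ) := h1
      _ ≤ 0 := by exact_mod_cast h2
  have hleT : ∀ j : Fin d, ∀ p ∈ gS d θ,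
      clm (fun i => (((if i = j then 0 else -1 : ℤ)) : ℝ)) p ≤ 0 := by
    rintro j p ⟨x, hx0, hg, rfl⟩
    have h1 : clm (fun i => (((fun i => if i = j then 0 else -1 : Fin d → ℤ) i : ℤ) : ℝ)) (toR x)
        = ((∑ i, (if i = j then 0 else -1) * x i : ℤ) : ℝ) := clm_int _ _
    have h2 : ∑ i, (if i = j then (0:ℤ) else -1) * x i ≤ 0 := by
      rw [sum_ite_coeff]
      have : 0 ≤ ∑ i ∈ Finset.univ.erase j, x i :=
        Finset.sum_nonneg (fun i _ => hx0 i)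
      omega
    calc clm (fun i => (((if i = j then 0 else -1 : ℤ)) : ℝ)) (toR x)
        = ((∑ i, (if i = j then 0 else -1) * x i : ℤ) : ℝ) := h1
      _ ≤ 0 := by exact_mod_cast h2
  have hleV : ∀ j : Fin d, ∀ p ∈ gS d θ,
      clm (fun i => (((if i = j then 1 else -(bsum θ) : ℤ)) : ℝ)) p ≤ ((mJ θ j : ℤ) : ℝ) := by
    rintro j p ⟨x, hx0, hg, rfl⟩
    have h1 : clm (fun i => (((fun i => if i = j then 1 else -(bsum θ) : Fin d → ℤ) i : ℤ) : ℝ)) (toR x)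
        = ((∑ i, (if i = j then 1 else -(bsum θ)) * x i : ℤ) : ℝ) := clm_int _ _
    have h2 : ∑ i, (if i = j then (1:ℤ) else -(bsum θ)) * x i ≤ mJ θ j := by
      rw [sum_ite_coeff]
      set s := ∑ i ∈ Finset.univ.erase j, x i with hsdef
      have hs0 : 0 ≤ s := Finset.sum_nonneg (fun i _ => hx0 i)
      have hxs : x j + s = ∑ i, x i :=
        Finset.add_sum_erase Finset.univ x (Finset.mem_univ j)
      have hxsle : x j + s ≤ bsum θ := by rw [hxs]; exact sum_le_bsum hg
      have hmj : bsum θ - 1 ≤ mJ θ j ∧ mJ θ j ≤ bsum θ := by unfold mJ; split <;> omega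
      by_cases hs : s = 0
      · have hz : ∀ i, i ≠ j → x i = 0 := by
          intro i hi
          exact (Finset.sum_eq_zero_iff_of_nonneg (fun i _ => hx0 i)).1 hs i
            (Finset.mem_erase.2 ⟨hi, Finset.mem_univ i⟩)
        obtain ⟨_, h2', _⟩ := eI_char hd hθ j x hx0 hg hz
        rw [hs]
        omega
      · have h1' : 1 ≤ s := by omega
        have h2' : bsum θ ≤ bsum θ * s := le_mul_of_one_le_right (by omega) h1'
        linarith [hmj.1]
    calc clm (fun i => (((if i = j then 1 else -(bsum θ) : ℤ)) : ℝ)) (toR x)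
        = ((∑ i, (if i = j then 1 else -(bsum θ)) * x i : ℤ) : ℝ) := h1
      _ ≤ ((mJ θ j : ℤ) : ℝ) := by exact_mod_cast h2
  -- 0 is an extreme point
  have h0ext : (0 : Fin d → ℝ) ∈ (grlexP d θ).extremePoints ℝ := by
    rw [← isExtreme_singleton]
    have he := isExposed_face (gS d θ) (clm (fun _ : Fin d => (((-1 : ℤ)) : ℝ))) 0
      hle0 0 h0S (map_zero _)
    rw [face0 hd hθ, convexHull_singleton] at he
    rw [hPeq]
    exact he.isExtreme
  -- each endpoint toR (eI j (mJ θ j)) is an extreme point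
  have hvext : ∀ j : Fin d, toR (eI j (mJ θ j)) ∈ (grlexP d θ).extremePoints ℝ := by
    intro j
    have hvmem : toR (eI j (mJ θ j)) ∈
        {p ∈ gS d θ | clm (fun i => (((if i = j then 1 else -(bsum θ) : ℤ)) : ℝ)) p
          = ((mJ θ j : ℤ) : ℝ)} := by
      rw [faceV hd hθ j]
      rfl
    rw [← isExtreme_singleton]
    have he := isExposed_face (gS d θ)
      (clm (fun i => (((if i = j then 1 else -(bsum θ) : ℤ)) : ℝ))) ((mJ θ j : ℤ) : ℝ)
      (hleV j) _ hvmem.1 hvmem.2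
    rw [faceV hd hθ j, convexHull_singleton] at he
    rw [hPeq]
    exact he.isExtreme
  -- segments to the endpoints are exposed faces
  have hedge : ∀ j : Fin d, IsExposed ℝ (grlexP d θ)
      (segment ℝ (0 : Fin d → ℝ) (toR (eI j (mJ θ j)))) := by
    intro j
    have he := isExposed_face (gS d θ)
      (clm (fun i => (((if i = j then 0 else -1 : ℤ)) : ℝ))) 0 (hleT j) 0 h0S (map_zero _)
    rw [faceT hd hθ j, convexHull_eI_range j (mJ θ j) (by linarith [mJ_ge hd hθ j])] at he
    rw [hPeq]
    exact he
  -- the endpoints are adjacent to 0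
  have hadj : ∀ j : Fin d, AdjVert (grlexP d θ) 0 (toR (eI j (mJ θ j))) := by
    intro j
    refine ⟨?_, h0ext, hvext j, hedge j⟩
    intro h
    have h1 := congrFun h j
    rw [toR_eI_apply, if_pos rfl] at h1
    have h2 : (0 : ℝ) = ((mJ θ j : ℤ) : ℝ) := h1
    have h3 : (0 : ℤ) = mJ θ j := by exact_mod_cast h2
    have := mJ_ge hd hθ j
    omega
  have hlast_mJ : mJ θ (⟨d - 1, by omega⟩ : Fin d) = bsum θ - 1 := if_pos rfl
  -- the main set equality
  have hset : {u | AdjVert (grlexP d θ) 0 u} =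
      {toR (wP d θ)} ∪ {p | ∃ j : ℕ, 1 ≤ j ∧ j ≤ d - 1 ∧ p = toR (beP d θ j)} := by
    apply Set.Subset.antisymm
    · intro u hu
      obtain ⟨hne, _, _, hexp⟩ := hu
      obtain ⟨l, hl⟩ := hexp ⟨0, left_mem_segment ℝ 0 u⟩
      rw [hPeq] at hl
      have h0seg : (0 : Fin d → ℝ) ∈ segment ℝ (0 : Fin d → ℝ) u := left_mem_segment ℝ _ _
      have hmax0 : ∀ y ∈ convexHull ℝ (gS d θ), l y ≤ 0 := by
        have h1 := (hl ▸ h0seg).2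
        intro y hy
        have := h1 y hy
        rwa [map_zero] at this
      have hleS : ∀ p ∈ gS d θ, l p ≤ 0 := fun p hp =>
        hmax0 p (subset_convexHull ℝ _ hp)
      have hl2 : segment ℝ (0 : Fin d → ℝ) u = convexHull ℝ {p ∈ gS d θ | l p = 0} := by
        rw [hl]
        exact face_convexHull _ l 0 hleS 0 h0S (map_zero l)
      have hcle : ∀ i : Fin d, l (Pi.single i 1) ≤ 0 := by
        intro i
        apply hleS
        rw [single_eq_toR]
        exact mem_gS_eI hd hθ i 1 one_pos.le (by linarith [mJ_ge hd hθ i])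
      have hseg_single : ∀ i : Fin d, l (Pi.single i 1) = 0 →
          ∃ a : ℝ, (Pi.single i 1 : Fin d → ℝ) = a • u := by
        intro i hci
        have hmem : (Pi.single i 1 : Fin d → ℝ) ∈ {p ∈ gS d θ | l p = 0} := by
          refine ⟨?_, hci⟩
          rw [single_eq_toR]
          exact mem_gS_eI hd hθ i 1 one_pos.le (by linarith [mJ_ge hd hθ i])
        have : (Pi.single i 1 : Fin d → ℝ) ∈ segment ℝ (0 : Fin d → ℝ) u := by
          rw [hl2]
          exact subset_convexHull ℝ _ hmem
        obtain ⟨a, _, _, ha⟩ := mem_segment_zero'.1 this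
        exact ⟨a, ha⟩
      have huniq : ∀ i k : Fin d, l (Pi.single i 1) = 0 → l (Pi.single k 1) = 0 → i = k := by
        intro i k hi hk
        by_contra hik
        obtain ⟨a, ha⟩ := hseg_single i hi
        obtain ⟨a', ha'⟩ := hseg_single k hk
        have h1 : a * u i = 1 := by
          have := congrFun ha i
          rw [Pi.single_eq_same, Pi.smul_apply, smul_eq_mul] at this
          exact this.symm
        have h2 : a' * u i = 0 := by
          have := congrFun ha' i
          rw [Pi.single_apply, if_neg hik, Pi.smul_apply, smul_eq_mul] at this
          exact this.symm
        have h3 : a' * u k = 1 := by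
          have := congrFun ha' k
          rw [Pi.single_eq_same, Pi.smul_apply, smul_eq_mul] at this
          exact this.symm
        rcases mul_eq_zero.1 h2 with h | h
        · rw [h, zero_mul] at h3; norm_num at h3
        · rw [h, mul_zero] at h1; norm_num at h1
      by_cases hz : ∃ i : Fin d, l (Pi.single i 1) = 0
      · obtain ⟨i₀, hi₀⟩ := hz
        have hT : {p ∈ gS d θ | l p = 0}
            = {p | ∃ t : ℤ, 0 ≤ t ∧ t ≤ mJ θ i₀ ∧ p = toR (eI i₀ t)} := by
          apply Set.Subset.antisymm
          · rintro p ⟨⟨x, hx0, hg, rfl⟩, hlp⟩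
            rw [clm_repr l (toR x)] at hlp
            have hterm : ∀ i ∈ Finset.univ, toR x i * l (Pi.single i 1) = 0 := by
              apply (Finset.sum_eq_zero_iff_of_nonpos ?_).1 hlp
              intro i _
              have hxi : (0 : ℝ) ≤ toR x i := by
                show (0 : ℝ) ≤ ((x i : ℤ) : ℝ)
                exact_mod_cast hx0 i
              have := mul_le_mul_of_nonneg_left (hcle i) hxi
              simpa using this
            have hzx : ∀ i, i ≠ i₀ → x i = 0 := by
              intro i hi
              have hc_ne : l (Pi.single i 1) ≠ 0 := fun h => hi (huniq i i₀ h hi₀)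
              rcases mul_eq_zero.1 (hterm i (Finset.mem_univ i)) with h | h
              · have h' : ((x i : ℤ) : ℝ) = 0 := h
                exact_mod_cast h'
              · exact absurd h hc_ne
            obtain ⟨h1, h2, h3⟩ := eI_char hd hθ i₀ x hx0 hg hzx
            exact ⟨x i₀, h1, h2, by rw [← h3]⟩
          · rintro p ⟨t, h0, ht, rfl⟩
            refine ⟨mem_gS_eI hd hθ i₀ t h0 ht, ?_⟩
            rw [clm_repr l (toR (eI i₀ t))]
            apply Finset.sum_eq_zero
            intro i _
            by_cases h : i = i₀
            · subst h
              rw [hi₀, mul_zero]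
            · rw [toR_eI_apply, if_neg h, zero_mul]
        rw [hT, convexHull_eI_range i₀ (mJ θ i₀) (by linarith [mJ_ge hd hθ i₀])] at hl2
        have hu : u = toR (eI i₀ (mJ θ i₀)) := segment_zero_endpoint hl2 (Ne.symm hne)
        by_cases hlast : (i₀ : ℕ) = d - 1
        · left
          have hi₀e : i₀ = (⟨d - 1, by omega⟩ : Fin d) := Fin.ext hlast
          have hmJ : mJ θ i₀ = bsum θ - 1 := if_pos hlast
          rw [hu, hmJ, hi₀e, ← wP_eq hd]
          rfl
        · right
          refine ⟨(i₀ : ℕ) + 1, by omega, ?_, ?_⟩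
          · have := i₀.isLt
            omega
          · have hmJ : mJ θ i₀ = bsum θ := if_neg hlast
            have hbeP : beP d θ ((i₀ : ℕ) + 1) = eI i₀ (bsum θ) := by
              funext i
              simp only [beP, eI]
              by_cases h : (i : ℕ) = (i₀ : ℕ) + 1 - 1
              · rw [if_pos h, if_pos (Fin.ext (by omega))]
              · rw [if_neg h, if_neg (fun he => by rw [he] at h; omega)]
            rw [hu, hmJ, hbeP]
      · push_neg at hz
        have hT : {p ∈ gS d θ | l p = 0} = {(0 : Fin d → ℝ)} := by
          apply Set.Subset.antisymm
          · rintro p ⟨⟨x, hx0, hg, rfl⟩, hlp⟩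
            rw [clm_repr l (toR x)] at hlp
            have hterm : ∀ i ∈ Finset.univ, toR x i * l (Pi.single i 1) = 0 := by
              apply (Finset.sum_eq_zero_iff_of_nonpos ?_).1 hlp
              intro i _
              have hxi : (0 : ℝ) ≤ toR x i := by
                show (0 : ℝ) ≤ ((x i : ℤ) : ℝ)
                exact_mod_cast hx0 i
              have := mul_le_mul_of_nonneg_left (hcle i) hxi
              simpa using this
            have : toR x = 0 := by
              funext i
              rcases mul_eq_zero.1 (hterm i (Finset.mem_univ i)) with h | h
              · exact h
              · exact absurd h (hz i)
            simp [this]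
          · rintro p rfl
            exact ⟨h0S, map_zero l⟩
        rw [hT, convexHull_singleton] at hl2
        have : u ∈ ({(0 : Fin d → ℝ)} : Set _) := hl2 ▸ right_mem_segment ℝ 0 u
        exact absurd (Set.mem_singleton_iff.1 this).symm hne
    · rintro u (hu | ⟨j, hj1, hj2, rfl⟩)
      · rw [Set.mem_singleton_iff.1 hu, wP_eq hd]
        have := hadj ⟨d - 1, by omega⟩
        rwa [hlast_mJ] at this
      · rw [beP_eq hd j hj1 hj2]
        have hjd : j - 1 < d := by omega
        have hne : ((⟨j - 1, hjd⟩ : Fin d) : ℕ) ≠ d - 1 := by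
          show j - 1 ≠ d - 1
          omega
        have hmJ : mJ θ (⟨j - 1, hjd⟩ : Fin d) = bsum θ := if_neg hne
        have h := hadj ⟨j - 1, hjd⟩
        rw [hmJ] at h
        exact h
  -- cardinality
  have hcard : ({toR (wP d θ)} ∪
      {p | ∃ j : ℕ, 1 ≤ j ∧ j ≤ d - 1 ∧ p = toR (beP d θ j)} : Set (Fin d → ℝ)).ncard = d := by
    have himg : {p | ∃ j : ℕ, 1 ≤ j ∧ j ≤ d - 1 ∧ p = toR (beP d θ j)}
        = (fun j => toR (beP d θ j)) '' (Set.Icc 1 (d - 1)) := by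
      ext p
      constructor
      · rintro ⟨j, h1, h2, rfl⟩
        exact ⟨j, ⟨h1, h2⟩, rfl⟩
      · rintro ⟨j, ⟨h1, h2⟩, rfl⟩
        exact ⟨j, h1, h2, rfl⟩
    have hinj : Set.InjOn (fun j => toR (beP d θ j)) (Set.Icc 1 (d - 1)) := by
      rintro j ⟨hj1, hj2⟩ j' ⟨hj1', hj2'⟩ heq
      have h1 := congrFun heq ⟨j - 1, by omega⟩
      have h2 : ((if ((⟨j - 1, by omega⟩ : Fin d) : ℕ) = j - 1 then bsum θ else 0 : ℤ) : ℝ)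
          = ((if ((⟨j - 1, by omega⟩ : Fin d) : ℕ) = j' - 1 then bsum θ else 0 : ℤ) : ℝ) := h1
      have h3 : (if ((⟨j - 1, by omega⟩ : Fin d) : ℕ) = j - 1 then bsum θ else 0 : ℤ)
          = (if ((⟨j - 1, by omega⟩ : Fin d) : ℕ) = j' - 1 then bsum θ else 0 : ℤ) := by
        exact_mod_cast h2
      rw [if_pos rfl] at h3
      by_cases h : ((⟨j - 1, by omega⟩ : Fin d) : ℕ) = j' - 1
      · have : j - 1 = j' - 1 := h
        omega
      · rw [if_neg h] at h3
        omega
    have hfin : ((fun j => toR (beP d θ j)) '' (Set.Icc 1 (d - 1))).Finite :=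
      (Set.finite_Icc _ _).image _
    have hnm : toR (wP d θ) ∉ (fun j => toR (beP d θ j)) '' (Set.Icc 1 (d - 1)) := by
      rintro ⟨j, ⟨hj1, hj2⟩, heq⟩
      have h1 := congrFun heq ⟨d - 1, by omega⟩
      have h2 : ((if ((⟨d - 1, by omega⟩ : Fin d) : ℕ) = j - 1 then bsum θ else 0 : ℤ) : ℝ)
          = ((if ((⟨d - 1, by omega⟩ : Fin d) : ℕ) = d - 1 then bsum θ - 1 else 0 : ℤ) : ℝ) := h1
      have h3 : (if ((⟨d - 1, by omega⟩ : Fin d) : ℕ) = j - 1 then bsum θ else 0 : ℤ)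
          = (if ((⟨d - 1, by omega⟩ : Fin d) : ℕ) = d - 1 then bsum θ - 1 else 0 : ℤ) := by
        exact_mod_cast h2
      rw [if_pos rfl] at h3
      by_cases h : ((⟨d - 1, by omega⟩ : Fin d) : ℕ) = j - 1
      · rw [if_pos h] at h3
        omega
      · rw [if_neg h] at h3
        omega
    rw [himg, Set.singleton_union, Set.ncard_insert_of_notMem hnm hfin,
      Set.ncard_image_of_injOn hinj]
    have hIcc : (Set.Icc 1 (d - 1)).ncard = d - 1 := by
      rw [← Finset.coe_Icc, Set.ncard_coe_finset, Nat.card_Icc]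
      omega
    rw [hIcc]
    omega
  -- tangent cone
  have horth : Convex ℝ {x : Fin d → ℝ | ∀ i, 0 ≤ x i} := by
    intro x hx y hy a c ha hc _
    intro i
    have : (a • x + c • y) i = a * x i + c * y i := by
      simp [smul_eq_mul]
    rw [this]
    exact add_nonneg (mul_nonneg ha (hx i)) (mul_nonneg hc (hy i))
  have hcone : tangentCone (grlexP d θ) 0 = {x | ∀ i, 0 ≤ x i} := by
    have hNbr : {z | ∃ x, AdjVert (grlexP d θ) 0 x ∧ z = x - 0}
        = Set.range (fun j : Fin d => toR (eI j (mJ θ j))) := by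
      ext z
      constructor
      · rintro ⟨x, hx, rfl⟩
        have hxR : x ∈ ({toR (wP d θ)} ∪
            {p | ∃ j : ℕ, 1 ≤ j ∧ j ≤ d - 1 ∧ p = toR (beP d θ j)} : Set (Fin d → ℝ)) := by
          rw [← hset]
          exact hx
        rcases hxR with h | ⟨j, hj1, hj2, rfl⟩
        · have hdd : d - 1 < d := by omega
          refine ⟨⟨d - 1, hdd⟩, ?_⟩
          show toR (eI (⟨d - 1, hdd⟩ : Fin d) (mJ θ (⟨d - 1, hdd⟩ : Fin d))) = x - 0
          have hmJ : mJ θ (⟨d - 1, hdd⟩ : Fin d) = bsum θ - 1 := if_pos rfl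
          rw [sub_zero, Set.mem_singleton_iff.1 h, wP_eq hd, hmJ]
        · have hjd : j - 1 < d := by omega
          refine ⟨⟨j - 1, hjd⟩, ?_⟩
          show toR (eI (⟨j - 1, hjd⟩ : Fin d) (mJ θ (⟨j - 1, hjd⟩ : Fin d))) = toR (beP d θ j) - 0
          have hne : ((⟨j - 1, hjd⟩ : Fin d) : ℕ) ≠ d - 1 := by
            show j - 1 ≠ d - 1
            omega
          have hmJ : mJ θ (⟨j - 1, hjd⟩ : Fin d) = bsum θ := if_neg hne
          rw [sub_zero, beP_eq hd j hj1 hj2, hmJ]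
      · rintro ⟨j, rfl⟩
        exact ⟨toR (eI j (mJ θ j)), hadj j, (sub_zero _).symm⟩
    ext p
    simp only [tangentCone, Set.mem_setOf_eq, zero_add]
    rw [hNbr]
    constructor
    · rintro ⟨y, hy, rfl⟩
      rcases hy with h0 | ⟨c, hc, z, hz, rfl⟩
      · rw [Set.mem_singleton_iff.1 h0]
        intro i
        simp
      · have hz' : ∀ i, 0 ≤ z i := by
          have hsub : convexHull ℝ (Set.range (fun j : Fin d => toR (eI j (mJ θ j))))
              ⊆ {x : Fin d → ℝ | ∀ i, 0 ≤ x i} := by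
            apply convexHull_min ?_ horth
            rintro _ ⟨j, rfl⟩ i
            show 0 ≤ toR (eI j (mJ θ j)) i
            rw [toR_eI_apply]
            split
            · have := mJ_ge hd hθ j
              have h2 : (2 : ℝ) ≤ ((mJ θ j : ℤ) : ℝ) := by exact_mod_cast this
              linarith
            · exact le_refl _
          exact hsub hz
        intro i
        rw [Pi.smul_apply, smul_eq_mul]
        exact mul_nonneg hc (hz' i)
    · intro hp
      have hmpos : ∀ i : Fin d, (0 : ℝ) < ((mJ θ i : ℤ) : ℝ) := by
        intro i
        have := mJ_ge hd hθ i
        exact_mod_cast (by omega : (0 : ℤ) < mJ θ i)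
      have hwt0 : ∀ i : Fin d, 0 ≤ p i / ((mJ θ i : ℤ) : ℝ) :=
        fun i => div_nonneg (hp i) (hmpos i).le
      have hxsum : p = ∑ i, (p i / ((mJ θ i : ℤ) : ℝ)) • toR (eI i (mJ θ i)) := by
        funext k
        rw [Finset.sum_apply]
        have hstep : ∀ i : Fin d, ((p i / ((mJ θ i : ℤ) : ℝ)) • toR (eI i (mJ θ i))) k
            = if k = i then p i / ((mJ θ i : ℤ) : ℝ) * ((mJ θ i : ℤ) : ℝ) else 0 := by
          intro i
          rw [Pi.smul_apply, toR_eI_apply, smul_eq_mul, mul_ite, mul_zero]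
        rw [Finset.sum_congr rfl (fun i _ => hstep i), Finset.sum_ite_eq]
        rw [if_pos (Finset.mem_univ k), div_mul_cancel₀ _ (hmpos k).ne']
      by_cases hczero : (∑ i, p i / ((mJ θ i : ℤ) : ℝ)) = 0
      · have hwz : ∀ i ∈ Finset.univ, p i / ((mJ θ i : ℤ) : ℝ) = 0 :=
          (Finset.sum_eq_zero_iff_of_nonneg (fun i _ => hwt0 i)).1 hczero
        have hp0 : p = 0 := by
          rw [hxsum]
          exact Finset.sum_eq_zero (fun i hi => by rw [hwz i hi, zero_smul])
        exact ⟨0, Or.inl rfl, hp0⟩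
      · have hcpos : 0 < ∑ i, p i / ((mJ θ i : ℤ) : ℝ) :=
          lt_of_le_of_ne (Finset.sum_nonneg (fun i _ => hwt0 i)) (Ne.symm hczero)
        refine ⟨p, Or.inr ⟨∑ i, p i / ((mJ θ i : ℤ) : ℝ), hcpos.le,
          Finset.univ.centerMass (fun i => p i / ((mJ θ i : ℤ) : ℝ))
            (fun j => toR (eI j (mJ θ j))), ?_, ?_⟩, rfl⟩
        · exact Finset.centerMass_mem_convexHull _ (fun i _ => hwt0 i) hcpos
            (fun i _ => ⟨i, rfl⟩)
        · rw [Finset.centerMass, smul_smul, mul_inv_cancel₀ hczero, one_smul]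
          exact hxsum
  exact ⟨hset, by rw [hset]; exact hcard, hcone⟩
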